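/- Define F(n,m) for n,m ≥ 0 by the recursion F(0,m) = 1 for all m, and F(n,m) = Σ_{ℓ=0}^{m} C(m+1,ℓ) · F(n-1,ℓ) for n ≥ 1. Then F(n,m) = Σ_{k=1}^{n+1} (-1)^{n-k+1} · k! · k^m · S(n+1,k), where S denotes the Stirling numbers of the second kind. -/

import Mathlib

/-- Stirling numbers of the second kind. -/
def stirling : ℕ → ℕ → ℕ
  | 0, 0 => 1
  | 0, _ + 1 => 0
  | _ + 1, 0 => 0
  | n + 1, k + 1 => (k + 1) * stirling n (k + 1) + stirling n k

/-- The number of `n × m` Drinfeld–Yetter mosaics, via its recursion. -/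
def mosaicCount : ℕ → ℕ → ℕ
  | 0, _ => 1
  | n + 1, m => ∑ ℓ ∈ Finset.range (m + 1), (m + 1).choose ℓ * mosaicCount n ℓ

lemma stirling_eq_zero_of_lt : ∀ n k : ℕ, n < k → stirling n k = 0
  | 0, _ + 1, _ => rfl
  | n + 1, k + 1, h => by
    have h1 : stirling n (k + 1) = 0 := stirling_eq_zero_of_lt n (k + 1) (by omega)
    have h2 : stirling n k = 0 := stirling_eq_zero_of_lt n k (by omega)
    show (k + 1) * stirling n (k + 1) + stirling n k = 0
    rw [h1, h2]; ring

lemma binom_sum (m : ℕ) (x : ℤ) :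
    ∑ ℓ ∈ Finset.range (m + 1), ((m + 1).choose ℓ : ℤ) * x ^ ℓ
      = (x + 1) ^ (m + 1) - x ^ (m + 1) := by
  have h := add_pow x 1 (m + 1)
  rw [Finset.sum_range_succ] at h
  simp only [one_pow, mul_one, Nat.choose_self, Nat.cast_one] at h
  have h2 : ∀ ℓ ∈ Finset.range (m+1),
      ((m+1).choose ℓ : ℤ) * x ^ ℓ = x ^ ℓ * ((m+1).choose ℓ) := fun ℓ _ => by ring
  rw [Finset.sum_congr rfl h2]
  linarith

lemma mosaic_range (n m : ℕ) :
    (mosaicCount n m : ℤ) =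
      ∑ j ∈ Finset.range (n + 1),
        (-1 : ℤ) ^ (n - j) * ((j + 1).factorial : ℤ) * ((j : ℤ) + 1) ^ m
          * (stirling (n + 1) (j + 1) : ℤ) := by
  induction n generalizing m with
  | zero =>
    simp [mosaicCount, stirling, Nat.factorial]
  | succ n ih =>
    have lhs : (mosaicCount (n + 1) m : ℤ)
        = ∑ j ∈ Finset.range (n + 1),
            (-1 : ℤ) ^ (n - j) * ((j + 1).factorial : ℤ) * (stirling (n + 1) (j + 1) : ℤ)
              * (((j : ℤ) + 2) ^ (m + 1) - ((j : ℤ) + 1) ^ (m + 1)) := by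
      show ((∑ ℓ ∈ Finset.range (m + 1), (m + 1).choose ℓ * mosaicCount n ℓ : ℕ) : ℤ) = _
      push_cast
      simp_rw [ih, Finset.mul_sum]
      rw [Finset.sum_comm]
      refine Finset.sum_congr rfl fun j _ => ?_
      have : ∀ ℓ ∈ Finset.range (m + 1),
          ((m + 1).choose ℓ : ℤ) * ((-1 : ℤ) ^ (n - j) * ((j + 1).factorial : ℤ)
            * ((j : ℤ) + 1) ^ ℓ * (stirling (n + 1) (j + 1) : ℤ))
          = ((-1 : ℤ) ^ (n - j) * ((j + 1).factorial : ℤ) * (stirling (n + 1) (j + 1) : ℤ))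
            * (((m + 1).choose ℓ : ℤ) * ((j : ℤ) + 1) ^ ℓ) := fun ℓ _ => by ring
      rw [Finset.sum_congr rfl this, ← Finset.mul_sum, binom_sum]
      ring_nf
    rw [lhs]
    -- RHS: expand stirling recursion
    have rhs : ∑ j ∈ Finset.range (n + 2),
          (-1 : ℤ) ^ (n + 1 - j) * ((j + 1).factorial : ℤ) * ((j : ℤ) + 1) ^ m
            * (stirling (n + 2) (j + 1) : ℤ)
        = (∑ j ∈ Finset.range (n + 2),
            (-1 : ℤ) ^ (n + 1 - j) * ((j + 1).factorial : ℤ) * ((j : ℤ) + 1) ^ m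
              * (((j : ℤ) + 1) * (stirling (n + 1) (j + 1) : ℤ)))
          + ∑ j ∈ Finset.range (n + 2),
            (-1 : ℤ) ^ (n + 1 - j) * ((j + 1).factorial : ℤ) * ((j : ℤ) + 1) ^ m
              * (stirling (n + 1) j : ℤ) := by
      rw [← Finset.sum_add_distrib]
      refine Finset.sum_congr rfl fun j _ => ?_
      show _ * ((((j + 1) * stirling (n + 1) (j + 1) + stirling (n + 1) j : ℕ)) : ℤ) = _
      push_cast
      ring
    rw [rhs]
    -- first sum: drop last term (stirling (n+1) (n+2) = 0)
    have hA : ∑ j ∈ Finset.range (n + 2),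
          (-1 : ℤ) ^ (n + 1 - j) * ((j + 1).factorial : ℤ) * ((j : ℤ) + 1) ^ m
            * (((j : ℤ) + 1) * (stirling (n + 1) (j + 1) : ℤ))
        = ∑ j ∈ Finset.range (n + 1),
          (-1 : ℤ) ^ (n + 1 - j) * ((j + 1).factorial : ℤ) * ((j : ℤ) + 1) ^ m
            * (((j : ℤ) + 1) * (stirling (n + 1) (j + 1) : ℤ)) := by
      rw [Finset.sum_range_succ, stirling_eq_zero_of_lt (n + 1) (n + 2) (by omega)]
      simp
    -- second sum: drop first term (stirling (n+1) 0 = 0) and shift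
    have hB : ∑ j ∈ Finset.range (n + 2),
          (-1 : ℤ) ^ (n + 1 - j) * ((j + 1).factorial : ℤ) * ((j : ℤ) + 1) ^ m
            * (stirling (n + 1) j : ℤ)
        = ∑ j ∈ Finset.range (n + 1),
          (-1 : ℤ) ^ (n - j) * ((j + 2).factorial : ℤ) * ((j : ℤ) + 2) ^ m
            * (stirling (n + 1) (j + 1) : ℤ) := by
      rw [Finset.sum_range_succ']
      have h0 : (stirling (n + 1) 0 : ℤ) = 0 := by
        show ((0 : ℕ) : ℤ) = 0; rfl
      rw [h0]
      simp only [mul_zero, add_zero]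
      refine Finset.sum_congr rfl fun j hj => ?_
      have hle : j ≤ n := by simpa [Nat.lt_succ_iff] using Finset.mem_range.mp hj
      have he : n + 1 - (j + 1) = n - j := by omega
      rw [he]
      push_cast
      ring
    rw [hA, hB, ← Finset.sum_add_distrib]
    refine Finset.sum_congr rfl fun j hj => ?_
    have hle : j ≤ n := by simpa [Nat.lt_succ_iff] using Finset.mem_range.mp hj
    have he : n + 1 - j = (n - j) + 1 := by omega
    rw [he, pow_succ]
    have hf : ((j + 2).factorial : ℤ) = ((j : ℤ) + 2) * ((j + 1).factorial : ℤ) := by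
      rw [Nat.factorial_succ]; push_cast; ring
    rw [hf]
    ring

theorem mosaicCount_eq_stirling_sum (n m : ℕ) :
    (mosaicCount n m : ℤ) =
      ∑ k ∈ Finset.Icc 1 (n + 1),
        (-1 : ℤ) ^ (n + 1 - k) * (k.factorial : ℤ) * (k : ℤ) ^ m * (stirling (n + 1) k : ℤ) := by
  rw [mosaic_range n m]
  refine Finset.sum_nbij' (fun j => j + 1) (fun k => k - 1) ?_ ?_ ?_ ?_ ?_
  · intro j hj; simp only [Finset.mem_range] at hj; simp [Finset.mem_Icc]; omega
  · intro k hk; simp only [Finset.mem_Icc] at hk; simp [Finset.mem_range]; omega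
  · intro j _; simp
  · intro k hk; simp only [Finset.mem_Icc] at hk; show k - 1 + 1 = k; omega
  · intro j _
    rw [Nat.succ_sub_succ]
    push_cast
    ring
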